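/- In the exponential-activation setup, for any ε > 0 and δ ∈ (0,1), suppose D ≥ 2048·ln(6m/ε), D ≥ 2048·ln(6m/δ), D ≥ 6·ln(2m), and m > 8·ln(6/δ). Then with probability at least 1 − δ over the draw of S ~ 𝒟^m, the learned hypothesis satisfies Pr_{(z,y)~𝒟}[y·h_S(z) < 1] ≤ ε; in particular its 0-1 test error is at most ε. -/

import Mathlib

open MeasureTheory ProbabilityTheory
open scoped ENNReal NNReal

noncomputable section

namespace ExpExample

/-- Squared Euclidean norm on `Fin n → ℝ`. -/
def sqnorm {n : ℕ} (v : Fin n → ℝ) : ℝ := ∑ i, v i ^ 2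

/-- An example: an input `(x₁, x₂) ∈ ℝ^D × ℝ^D` together with a real label. -/
abbrev Ex (D : ℕ) := ((Fin D → ℝ) × (Fin D → ℝ)) × ℝ

/-- The noise distribution: `D` i.i.d. standard Gaussian `N(0,1)` coordinates. -/
def noise (D : ℕ) : Measure (Fin D → ℝ) :=
  Measure.pi fun _ => gaussianReal 0 1

/-- The data distribution `𝒟`: label `y` uniform on `{-1,1}`; given `y`,
`x₁ = y·u` and `x₂ ~ N(0, I)`. -/
def μD (D : ℕ) (u : Fin D → ℝ) : Measure (Ex D) :=
  (1/2 : ℝ≥0∞) • (noise D).map (fun x₂ => ((u, x₂), (1 : ℝ))) +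
  (1/2 : ℝ≥0∞) • (noise D).map (fun x₂ => ((-u, x₂), (-1 : ℝ)))

/-- Distribution of an i.i.d. `m`-sample from `𝒟`. -/
def μS (D m : ℕ) (u : Fin D → ℝ) : Measure (Fin m → Ex D) :=
  Measure.pi fun _ => μD D u

/-- The hypothesis learned on `S`:
`h_S(z) = Σᵢ y⁽ⁱ⁾·exp(‖(z + x⁽ⁱ⁾)/2‖₂²)`, where the squared norm on
`ℝ^{2D} = ℝ^D × ℝ^D` is the sum of the squared norms of the two components. -/
def alg (D m : ℕ) (S : Fin m → Ex D) : (Fin D → ℝ) × (Fin D → ℝ) → ℝ :=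
  fun z => ∑ i, (S i).2 *
    Real.exp (sqnorm ((1/2 : ℝ) • (z.1 + (S i).1.1)) +
              sqnorm ((1/2 : ℝ) • (z.2 + (S i).1.2)))

/-- The ramp loss `L^{(γ)}`. -/
def ramp (γ y' y : ℝ) : ℝ :=
  if y * y' ≤ 0 then 1 else if γ ≤ y * y' then 0 else 1 - y * y' / γ

/-- Expected (test) loss of a hypothesis. -/
def testLoss (D : ℕ) (u : Fin D → ℝ) (γ : ℝ)
    (h : (Fin D → ℝ) × (Fin D → ℝ) → ℝ) : ℝ :=
  ∫ z, ramp γ (h z.1) z.2 ∂(μD D u)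

/-- Empirical loss of a hypothesis on a sample `S`. -/
def empLoss (D m : ℕ) (γ : ℝ) (h : (Fin D → ℝ) × (Fin D → ℝ) → ℝ)
    (S : Fin m → Ex D) : ℝ :=
  (1 / (m : ℝ)) * ∑ i, ramp γ (h (S i).1) (S i).2

/-- The generalization error `ε_gen(m,δ)` of the algorithm w.r.t. `L^{(γ)}`. -/
def genErr (D m : ℕ) (u : Fin D → ℝ) (γ δ : ℝ) : ℝ :=
  sInf {ε : ℝ | 0 ≤ ε ∧
    ENNReal.ofReal (1 - δ) ≤
      μS D m u {S | testLoss D u γ (alg D m S)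
        - empLoss D m γ (alg D m S) S ≤ ε}}

/-- The tightest algorithm-dependent uniform convergence bound `ε_unif-alg(m,δ)`
w.r.t. `L^{(γ)}`. -/
def unifAlg (D m : ℕ) (u : Fin D → ℝ) (γ δ : ℝ) : ℝ :=
  sInf {ε : ℝ | 0 ≤ ε ∧
    ∃ 𝒮 : Set (Fin m → Ex D), MeasurableSet 𝒮 ∧
      ENNReal.ofReal (1 - δ) ≤ μS D m u 𝒮 ∧
      ∀ S ∈ 𝒮, ∀ S' ∈ 𝒮,
        |testLoss D u γ (alg D m S') - empLoss D m γ (alg D m S') S| ≤ ε}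

section Auxiliary
open Real


lemma lintegral_pi_fin {n : ℕ} (μ : Measure ℝ) [SigmaFinite μ] (f : Fin n → ℝ → ℝ≥0∞)
    (hf : ∀ i, Measurable (f i)) :
    ∫⁻ x, ∏ i, f i (x i) ∂(Measure.pi fun _ : Fin n => μ) = ∏ i, ∫⁻ y, f i y ∂μ := by
  induction n with
  | zero => simp [Measure.pi_of_empty]
  | succ n ih =>
    have hmp := (measurePreserving_piFinSuccAbove (fun _ : Fin (n+1) => μ) 0).symm
    have hmeas : Measurable fun x : Fin (n+1) → ℝ => ∏ i, f i (x i) :=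
      Finset.measurable_prod _ fun i _ => (hf i).comp (measurable_pi_apply i)
    rw [← hmp.lintegral_comp hmeas]
    have key : ∀ p : ℝ × (Fin n → ℝ),
        (∏ i, f i (((MeasurableEquiv.piFinSuccAbove (fun _ : Fin (n+1) => ℝ) 0).symm p) i))
          = f 0 p.1 * ∏ j : Fin n, f j.succ (p.2 j) := by
      intro p
      rw [MeasurableEquiv.piFinSuccAbove_symm_apply]
      simp [Fin.insertNthEquiv, Fin.insertNth_zero, Fin.prod_univ_succ]
    simp only [key]
    rw [lintegral_prod_mul (f := f 0) (g := fun x₂ : Fin n → ℝ => ∏ j : Fin n, f j.succ (x₂ j))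
      ((hf 0).aemeasurable)
      ((Finset.measurable_prod _ fun (j : Fin n) _ => (hf j.succ).comp (measurable_pi_apply j)).aemeasurable)]
    rw [ih _ (fun j => hf j.succ), Fin.prod_univ_succ]

lemma integral_exp_quad (b c : ℝ) (hb : 0 < b) :
    ∫ y : ℝ, Real.exp (-b * y^2 + c * y) = Real.sqrt (π / b) * Real.exp (c^2 / (4*b)) := by
  have h : ∀ y : ℝ, Real.exp (-b * y^2 + c * y)
      = Real.exp (c^2/(4*b)) * Real.exp (-b * (y - c/(2*b))^2) := by
    intro y
    rw [← Real.exp_add]; congr 1; field_simp; ring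
  simp_rw [h]
  rw [integral_const_mul, integral_sub_right_eq_self (fun y => Real.exp (-b * y^2)) (c/(2*b)),
    integral_gaussian]
  ring

lemma integrable_exp_quad (b c : ℝ) (hb : 0 < b) :
    Integrable (fun y : ℝ => Real.exp (-b * y^2 + c * y)) := by
  have h : ∀ y : ℝ, Real.exp (-b * y^2 + c * y)
      = Real.exp (c^2/(4*b)) * Real.exp (-b * (y - c/(2*b))^2) := by
    intro y
    rw [← Real.exp_add]; congr 1; field_simp; ring
  simp_rw [h]
  exact ((integrable_exp_neg_mul_sq hb).comp_sub_right (c/(2*b))).const_mul _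

lemma lintegral_gauss_exp (t c : ℝ) (ht : t < 1/2) :
    ∫⁻ y, ENNReal.ofReal (Real.exp (t * y^2 + c * y)) ∂(gaussianReal 0 1)
      = ENNReal.ofReal ((Real.sqrt (1 - 2*t))⁻¹ * Real.exp (c^2 / (2*(1-2*t)))) := by
  have hb : (0:ℝ) < 1/2 - t := by linarith
  rw [gaussianReal_of_var_ne_zero 0 one_ne_zero,
    lintegral_withDensity_eq_lintegral_mul _ (measurable_gaussianPDF 0 1)
      (Measurable.ennreal_ofReal (by fun_prop))]
  have hpdf : ∀ y : ℝ, (gaussianPDF 0 1 * fun y => ENNReal.ofReal (Real.exp (t*y^2+c*y))) y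
      = ENNReal.ofReal ((Real.sqrt (2*π))⁻¹ * Real.exp (-(1/2-t) * y^2 + c*y)) := by
    intro y
    simp only [Pi.mul_apply, gaussianPDF_def, gaussianPDFReal_def]
    rw [← ENNReal.ofReal_mul (by positivity)]
    congr 1
    rw [mul_assoc, ← Real.exp_add]
    norm_num
    ring_nf
    exact Or.inl trivial
  simp_rw [hpdf]
  rw [← ofReal_integral_eq_lintegral_ofReal
      (((integrable_exp_quad _ c hb).const_mul _))
      (Filter.Eventually.of_forall fun y => by positivity)]
  rw [integral_const_mul, integral_exp_quad _ _ hb]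
  congr 1
  have h2 : (1:ℝ) - 2*t = 2 * (1/2 - t) := by ring
  have : (Real.sqrt (2*π))⁻¹ * (Real.sqrt (π / (1/2-t))) = (Real.sqrt (1-2*t))⁻¹ := by
    rw [← Real.sqrt_inv, ← Real.sqrt_mul (by positivity), h2, ← Real.sqrt_inv]
    congr 1
    have hπ : π ≠ 0 := Real.pi_ne_zero
    have h3 : (1:ℝ) - 2*t ≠ 0 := by linarith
    field_simp
  rw [← mul_assoc, this, h2]
  ring_nf



lemma noise_chernoff {D : ℕ} (g : Fin D → ℝ → ℝ) (hg : ∀ i, Measurable (g i))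
    (J : Fin D → ℝ) (hJ0 : ∀ i, 0 ≤ J i)
    (hJ : ∀ i, ∫⁻ y, ENNReal.ofReal (Real.exp (g i y)) ∂(gaussianReal 0 1) = ENNReal.ofReal (J i))
    (a : ℝ) :
    noise D {x | a ≤ ∑ i, g i (x i)} ≤ ENNReal.ofReal (Real.exp (-a) * ∏ i, J i) := by
  have hsum : Measurable fun x : Fin D → ℝ => ∑ i, g i (x i) :=
    Finset.measurable_sum _ fun i _ => (hg i).comp (measurable_pi_apply i)
  have hset : {x : Fin D → ℝ | a ≤ ∑ i, g i (x i)}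
      = {x | ENNReal.ofReal (Real.exp a) ≤ ENNReal.ofReal (Real.exp (∑ i, g i (x i)))} := by
    ext x
    simp only [Set.mem_setOf_eq, ENNReal.ofReal_le_ofReal_iff (Real.exp_pos _).le,
      Real.exp_le_exp]
  have hlint : ∫⁻ x, ENNReal.ofReal (Real.exp (∑ i, g i (x i))) ∂(noise D)
      = ENNReal.ofReal (∏ i, J i) := by
    have : ∀ x : Fin D → ℝ, ENNReal.ofReal (Real.exp (∑ i, g i (x i)))
        = ∏ i, ENNReal.ofReal (Real.exp (g i (x i))) := by
      intro x
      rw [Real.exp_sum, ENNReal.ofReal_prod_of_nonneg (fun i _ => (Real.exp_pos _).le)]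
    simp_rw [this]
    rw [noise, lintegral_pi_fin (gaussianReal 0 1) (fun i y => ENNReal.ofReal (Real.exp (g i y)))
      (fun i => Measurable.ennreal_ofReal ((Real.measurable_exp).comp (hg i)))]
    simp_rw [hJ]
    rw [ENNReal.ofReal_prod_of_nonneg (fun i _ => hJ0 i)]
  have hmark := meas_ge_le_lintegral_div (μ := noise D)
    (f := fun x => ENNReal.ofReal (Real.exp (∑ i, g i (x i))))
    (Measurable.ennreal_ofReal (by fun_prop)).aemeasurable
    (ε := ENNReal.ofReal (Real.exp a))
    (by simp [Real.exp_pos, ENNReal.ofReal_pos]) ENNReal.ofReal_ne_top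
  rw [hset]
  refine hmark.trans ?_
  have hprodJ : 0 ≤ ∏ i, J i := Finset.prod_nonneg (fun i _ => hJ0 i)
  rw [hlint, ENNReal.le_ofReal_iff_toReal_le ?fin
    (mul_nonneg (Real.exp_pos _).le hprodJ)]
  case fin =>
    exact (ENNReal.div_lt_top ENNReal.ofReal_ne_top
      (by simp [Real.exp_pos, ENNReal.ofReal_pos])).ne
  rw [ENNReal.toReal_div, ENNReal.toReal_ofReal hprodJ,
    ENNReal.toReal_ofReal (Real.exp_pos _).le, Real.exp_neg]
  rw [div_eq_mul_inv, mul_comm]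

lemma exp_nat_bound (c : ℝ) (D : ℕ) : (Real.exp c)^D = Real.exp (D * c) := by
  rw [← Real.exp_nat_mul]

lemma noise_sq_upper (D : ℕ) :
    noise D {x | 35*(D:ℝ)/32 ≤ sqnorm x} ≤ ENNReal.ofReal (Real.exp (-(D:ℝ)/2048)) := by
  have hJ : ∀ i : Fin D, ∫⁻ y, ENNReal.ofReal (Real.exp ((1/32:ℝ)*y^2 + 0*y)) ∂(gaussianReal 0 1)
      = ENNReal.ofReal ((Real.sqrt (15/16))⁻¹) := by
    intro i
    rw [lintegral_gauss_exp (1/32) 0 (by norm_num)]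
    norm_num
  have h := noise_chernoff (fun _ y => (1/32:ℝ)*y^2 + 0*y)
      (fun _ => by fun_prop) (fun _ => (Real.sqrt (15/16))⁻¹)
      (fun _ => by positivity) hJ (35*(D:ℝ)/1024)
  have hset : {x : Fin D → ℝ | 35*(D:ℝ)/32 ≤ sqnorm x}
      = {x : Fin D → ℝ | 35*(D:ℝ)/1024 ≤ ∑ i, ((1/32:ℝ)*(x i)^2 + 0*(x i))} := by
    ext x
    have h32 : ∑ i, ((1/32:ℝ)*(x i)^2 + 0*(x i)) = sqnorm x / 32 := by
      rw [sqnorm, Finset.sum_div]; exact Finset.sum_congr rfl (fun i _ => by ring)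
    simp only [Set.mem_setOf_eq, h32]
    constructor <;> intro <;> linarith
  rw [hset]
  refine h.trans (ENNReal.ofReal_le_ofReal ?_)
  rw [Finset.prod_const, Finset.card_univ, Fintype.card_fin]
  have hcoord : (Real.sqrt (15/16))⁻¹ ≤ Real.exp (69/2048) := by
    rw [← Real.sqrt_inv, show ((69:ℝ)/2048) = (69/1024)/2 by norm_num, Real.exp_half]
    apply Real.sqrt_le_sqrt
    have := Real.add_one_le_exp ((69:ℝ)/1024)
    rw [show ((15:ℝ)/16)⁻¹ = 16/15 by norm_num]
    nlinarith
  calc Real.exp (-(35*(D:ℝ)/1024)) * ((Real.sqrt (15/16))⁻¹)^D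
      ≤ Real.exp (-(35*(D:ℝ)/1024)) * (Real.exp (69/2048))^D := by
        apply mul_le_mul_of_nonneg_left (pow_le_pow_left₀ (by positivity) hcoord D)
          (Real.exp_pos _).le
    _ = Real.exp (-(D:ℝ)/2048) := by
        rw [exp_nat_bound, ← Real.exp_add]; congr 1; ring

lemma noise_sq_lower (D : ℕ) :
    noise D {x | sqnorm x ≤ 29*(D:ℝ)/32} ≤ ENNReal.ofReal (Real.exp (-(D:ℝ)/2048)) := by
  have hJ : ∀ i : Fin D, ∫⁻ y, ENNReal.ofReal (Real.exp ((-1/32:ℝ)*y^2 + 0*y)) ∂(gaussianReal 0 1)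
      = ENNReal.ofReal ((Real.sqrt (17/16))⁻¹) := by
    intro i
    rw [lintegral_gauss_exp (-1/32) 0 (by norm_num)]
    norm_num
  have h := noise_chernoff (fun _ y => (-1/32:ℝ)*y^2 + 0*y)
      (fun _ => by fun_prop) (fun _ => (Real.sqrt (17/16))⁻¹)
      (fun _ => by positivity) hJ (-(29*(D:ℝ)/1024))
  have hset : {x : Fin D → ℝ | sqnorm x ≤ 29*(D:ℝ)/32}
      = {x : Fin D → ℝ | -(29*(D:ℝ)/1024) ≤ ∑ i, ((-1/32:ℝ)*(x i)^2 + 0*(x i))} := by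
    ext x
    have h32 : ∑ i, ((-1/32:ℝ)*(x i)^2 + 0*(x i)) = -(sqnorm x / 32) := by
      rw [sqnorm]
      calc ∑ i, ((-1/32:ℝ)*(x i)^2 + 0*(x i)) = ∑ i, -((x i)^2/32) :=
            Finset.sum_congr rfl (fun i _ => by ring)
        _ = -(∑ i, (x i)^2/32) := by rw [Finset.sum_neg_distrib]
        _ = -((∑ i, (x i)^2)/32) := by rw [Finset.sum_div]
    simp only [Set.mem_setOf_eq, h32]
    constructor <;> intro <;> linarith
  rw [hset]
  refine h.trans (ENNReal.ofReal_le_ofReal ?_)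
  rw [Finset.prod_const, Finset.card_univ, Fintype.card_fin]
  have hexp : Real.exp ((59:ℝ)/1024) ≤ 17/16 := by
    have h1 : (965:ℝ)/1024 ≤ Real.exp (-(59/1024)) := by
      have := Real.add_one_le_exp (-(59/1024):ℝ); linarith
    have h2 : Real.exp ((59:ℝ)/1024) = (Real.exp (-(59/1024):ℝ))⁻¹ := by
      rw [← Real.exp_neg]; norm_num
    rw [h2]
    have h3 : (Real.exp (-(59/1024):ℝ))⁻¹ ≤ ((965:ℝ)/1024)⁻¹ :=
      inv_anti₀ (by norm_num) h1
    refine h3.trans (by norm_num)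
  have hcoord : (Real.sqrt (17/16))⁻¹ ≤ Real.exp (-(59/2048)) := by
    rw [← Real.sqrt_inv, show (-(59/2048):ℝ) = (-(59/1024))/2 by norm_num, Real.exp_half]
    apply Real.sqrt_le_sqrt
    rw [show ((17:ℝ)/16)⁻¹ = 16/17 by norm_num]
    have h2 : Real.exp (-(59/1024):ℝ) = (Real.exp ((59/1024):ℝ))⁻¹ := by
      rw [← Real.exp_neg]
    rw [h2]
    have := inv_anti₀ (Real.exp_pos ((59:ℝ)/1024)) hexp
    refine le_trans (by norm_num) this
  calc Real.exp (-(-(29*(D:ℝ)/1024))) * ((Real.sqrt (17/16))⁻¹)^D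
      ≤ Real.exp (29*(D:ℝ)/1024) * (Real.exp (-(59/2048)))^D := by
        rw [neg_neg]
        apply mul_le_mul_of_nonneg_left (pow_le_pow_left₀ (by positivity) hcoord D)
          (Real.exp_pos _).le
    _ = Real.exp (-(D:ℝ)/2048) := by
        rw [exp_nat_bound, ← Real.exp_add]; congr 1; ring

lemma noise_inner (D : ℕ) (w : Fin D → ℝ) (hw : sqnorm w ≤ 35*(D:ℝ)/32) :
    noise D {x | 7*(D:ℝ)/192 ≤ ∑ j, w j * x j} ≤ ENNReal.ofReal (Real.exp (-(D:ℝ)/2048)) := by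
  have hJ : ∀ i : Fin D, ∫⁻ y, ENNReal.ofReal (Real.exp ((0:ℝ)*y^2 + (w i/30)*y)) ∂(gaussianReal 0 1)
      = ENNReal.ofReal (Real.exp ((w i)^2/1800)) := by
    intro i
    rw [lintegral_gauss_exp 0 (w i/30) (by norm_num)]
    congr 1
    rw [show (1:ℝ) - 2*0 = 1 by norm_num, Real.sqrt_one]
    rw [inv_one, one_mul]
    congr 1
    ring
  have h := noise_chernoff (fun i y => (0:ℝ)*y^2 + (w i/30)*y)
      (fun _ => by fun_prop) (fun i => Real.exp ((w i)^2/1800))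
      (fun _ => (Real.exp_pos _).le) hJ (7*(D:ℝ)/5760)
  have hset : {x : Fin D → ℝ | 7*(D:ℝ)/192 ≤ ∑ j, w j * x j}
      = {x : Fin D → ℝ | 7*(D:ℝ)/5760 ≤ ∑ i, ((0:ℝ)*(x i)^2 + (w i/30)*(x i))} := by
    ext x
    have h30 : ∑ i, ((0:ℝ)*(x i)^2 + (w i/30)*(x i)) = (∑ j, w j * x j) / 30 := by
      rw [Finset.sum_div]; exact Finset.sum_congr rfl (fun i _ => by ring)
    simp only [Set.mem_setOf_eq, h30]
    constructor <;> intro <;> linarith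
  rw [hset]
  refine h.trans (ENNReal.ofReal_le_ofReal ?_)
  have hprod : ∏ i, Real.exp ((w i)^2/1800) = Real.exp (sqnorm w / 1800) := by
    rw [← Real.exp_sum, sqnorm, Finset.sum_div]
  rw [hprod, ← Real.exp_add, Real.exp_le_exp]
  have hD : (0:ℝ) ≤ D := Nat.cast_nonneg D
  linarith

instance noise_prob (D : ℕ) : IsProbabilityMeasure (noise D) := by
  unfold noise; infer_instance

lemma meas_f1 {D : ℕ} (u : Fin D → ℝ) :
    Measurable (fun x₂ : Fin D → ℝ => (((u, x₂) : (Fin D → ℝ) × (Fin D → ℝ)), (1:ℝ))) := by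
  fun_prop

lemma meas_f2 {D : ℕ} (u : Fin D → ℝ) :
    Measurable (fun x₂ : Fin D → ℝ => (((-u, x₂) : (Fin D → ℝ) × (Fin D → ℝ)), (-1:ℝ))) := by
  fun_prop

lemma μD_apply {D : ℕ} (u : Fin D → ℝ) (B : Set (Ex D)) (hB : MeasurableSet B) :
    μD D u B = 1/2 * noise D ((fun x₂ => ((u, x₂), (1:ℝ))) ⁻¹' B)
             + 1/2 * noise D ((fun x₂ => ((-u, x₂), (-1:ℝ))) ⁻¹' B) := by
  rw [μD, Measure.add_apply, Measure.smul_apply, Measure.smul_apply,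
    Measure.map_apply (meas_f1 u) hB, Measure.map_apply (meas_f2 u) hB, smul_eq_mul, smul_eq_mul]

instance μD_prob (D : ℕ) (u : Fin D → ℝ) : IsProbabilityMeasure (μD D u) := by
  constructor
  rw [μD_apply u Set.univ MeasurableSet.univ]
  simp only [Set.preimage_univ, measure_univ]
  simp only [mul_one, one_div]
  exact ENNReal.inv_two_add_inv_two

instance μS_prob (D m : ℕ) (u : Fin D → ℝ) : IsProbabilityMeasure (μS D m u) := by
  unfold μS; infer_instance

lemma μS_all {D m : ℕ} (u : Fin D → ℝ) (A : Set (Ex D)) :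
    μS D m u (Set.univ.pi fun _ => A) = μD D u A ^ m := by
  rw [μS, Measure.pi_pi, Finset.prod_const, Finset.card_univ, Fintype.card_fin]

lemma μS_eval {D m : ℕ} (u : Fin D → ℝ) (i : Fin m) (B : Set (Ex D)) :
    μS D m u (Function.eval i ⁻¹' B) = μD D u B := by
  classical
  rw [μS, Set.eval_preimage, Measure.pi_pi]
  rw [Finset.prod_eq_single i (fun j _ hj => by rw [Function.update_of_ne hj]; exact measure_univ)
    (fun h => absurd (Finset.mem_univ i) h)]
  rw [Function.update_self]



lemma continuous_sqnorm {n : ℕ} : Continuous (sqnorm (n := n)) := by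
  unfold sqnorm
  exact continuous_finset_sum _ (fun i _ => (continuous_apply i).pow 2)

def GoodEx (D : ℕ) (u : Fin D → ℝ) : Set (Ex D) :=
  {e | ((e.1.1 = u ∧ e.2 = 1) ∨ (e.1.1 = -u ∧ e.2 = -1)) ∧
       29*(D:ℝ)/32 ≤ sqnorm e.1.2 ∧ sqnorm e.1.2 ≤ 35*(D:ℝ)/32}

lemma measurable_GoodEx {D : ℕ} (u : Fin D → ℝ) : MeasurableSet (GoodEx D u) := by
  have h1 : Measurable fun e : Ex D => e.1.1 := (measurable_fst.comp measurable_fst)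
  have h2 : Measurable fun e : Ex D => e.1.2 := (measurable_snd.comp measurable_fst)
  have h3 : Measurable fun e : Ex D => e.2 := measurable_snd
  have hs : Measurable fun e : Ex D => sqnorm e.1.2 := continuous_sqnorm.measurable.comp h2
  refine MeasurableSet.inter ?_ (MeasurableSet.inter ?_ ?_)
  · refine MeasurableSet.union ?_ ?_
    · exact ((h1 (isClosed_singleton.measurableSet)).inter (h3 (isClosed_singleton.measurableSet)))
    · exact ((h1 (isClosed_singleton.measurableSet)).inter (h3 (isClosed_singleton.measurableSet)))
  · exact measurableSet_le measurable_const hs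
  · exact measurableSet_le hs measurable_const

lemma μD_noise_event {D : ℕ} (u : Fin D → ℝ) (C : Set (Fin D → ℝ)) (hC : MeasurableSet C) :
    μD D u {e : Ex D | e.1.2 ∈ C} = noise D C := by
  have hmeas : MeasurableSet {e : Ex D | e.1.2 ∈ C} :=
    (measurable_snd.comp measurable_fst) hC
  rw [μD_apply u _ hmeas]
  have : ∀ v : Fin D → ℝ, ∀ y : ℝ,
      (fun x₂ => (((v, x₂) : (Fin D → ℝ) × (Fin D → ℝ)), y)) ⁻¹' {e : Ex D | e.1.2 ∈ C} = C := by
    intro v y; rfl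
  rw [this, this, ← add_mul, one_div, ENNReal.inv_two_add_inv_two, one_mul]

lemma μD_GoodExc {D : ℕ} (u : Fin D → ℝ) :
    μD D u (GoodEx D u)ᶜ ≤ 2 * ENNReal.ofReal (Real.exp (-(D:ℝ)/2048)) := by
  have hsub : (GoodEx D u)ᶜ ⊆
      ({e : Ex D | ¬((e.1.1 = u ∧ e.2 = 1) ∨ (e.1.1 = -u ∧ e.2 = -1))} ∪
       ({e : Ex D | e.1.2 ∈ {x | sqnorm x ≤ 29*(D:ℝ)/32}} ∪
        {e : Ex D | e.1.2 ∈ {x | 35*(D:ℝ)/32 ≤ sqnorm x}})) := by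
    intro e he
    simp only [GoodEx, Set.mem_compl_iff, Set.mem_setOf_eq, not_and_or] at he
    rcases he with h | h
    · exact Or.inl h
    rcases h with h | h
    · exact Or.inr (Or.inl (le_of_not_ge h))
    · exact Or.inr (Or.inr (le_of_not_ge h))
  refine (measure_mono hsub).trans ?_
  refine (measure_union_le _ _).trans ?_
  have hz : μD D u {e : Ex D | ¬((e.1.1 = u ∧ e.2 = 1) ∨ (e.1.1 = -u ∧ e.2 = -1))} = 0 := by
    rw [μD_apply u _]
    · have e1 : (fun x₂ => (((u, x₂) : (Fin D → ℝ) × (Fin D → ℝ)), (1:ℝ))) ⁻¹'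
          {e : Ex D | ¬((e.1.1 = u ∧ e.2 = 1) ∨ (e.1.1 = -u ∧ e.2 = -1))} = ∅ := by
        ext x₂; simp
      have e2 : (fun x₂ => (((-u, x₂) : (Fin D → ℝ) × (Fin D → ℝ)), (-1:ℝ))) ⁻¹'
          {e : Ex D | ¬((e.1.1 = u ∧ e.2 = 1) ∨ (e.1.1 = -u ∧ e.2 = -1))} = ∅ := by
        ext x₂; simp
      rw [e1, e2]
      simp
    · have h1 : Measurable fun e : Ex D => e.1.1 := (measurable_fst.comp measurable_fst)
      have h3 : Measurable fun e : Ex D => e.2 := measurable_snd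
      exact (((h1 (isClosed_singleton.measurableSet)).inter
        (h3 (isClosed_singleton.measurableSet))).union
        ((h1 (isClosed_singleton.measurableSet)).inter
        (h3 (isClosed_singleton.measurableSet)))).compl
  rw [hz, zero_add]
  refine (measure_union_le _ _).trans ?_
  have hlow := noise_sq_lower D
  have hup := noise_sq_upper D
  have hm1 : MeasurableSet {x : Fin D → ℝ | sqnorm x ≤ 29*(D:ℝ)/32} :=
    measurableSet_le continuous_sqnorm.measurable measurable_const
  have hm2 : MeasurableSet {x : Fin D → ℝ | 35*(D:ℝ)/32 ≤ sqnorm x} :=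
    measurableSet_le measurable_const continuous_sqnorm.measurable
  rw [μD_noise_event u _ hm1, μD_noise_event u _ hm2, two_mul]
  exact add_le_add hlow hup

lemma μD_label {D : ℕ} (u : Fin D → ℝ) (y : ℝ) (hy : y = 1 ∨ y = -1) :
    μD D u {e : Ex D | ¬ e.2 = y} = 1/2 := by
  have hm : MeasurableSet {e : Ex D | ¬ e.2 = y} :=
    (measurable_snd (isClosed_singleton (x := y)).measurableSet).compl
  rw [μD_apply u _ hm]
  rcases hy with hy | hy <;> subst hy
  · have e1 : (fun x₂ => (((u, x₂) : (Fin D → ℝ) × (Fin D → ℝ)), (1:ℝ))) ⁻¹'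
        {e : Ex D | ¬ e.2 = 1} = ∅ := by ext x₂; simp
    have e2 : (fun x₂ => (((-u, x₂) : (Fin D → ℝ) × (Fin D → ℝ)), (-1:ℝ))) ⁻¹'
        {e : Ex D | ¬ e.2 = 1} = Set.univ := by ext x₂; simp; norm_num
    rw [e1, e2]; simp
  · have e1 : (fun x₂ => (((u, x₂) : (Fin D → ℝ) × (Fin D → ℝ)), (1:ℝ))) ⁻¹'
        {e : Ex D | ¬ e.2 = -1} = Set.univ := by ext x₂; simp; norm_num
    have e2 : (fun x₂ => (((-u, x₂) : (Fin D → ℝ) × (Fin D → ℝ)), (-1:ℝ))) ⁻¹'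
        {e : Ex D | ¬ e.2 = -1} = ∅ := by ext x₂; simp
    rw [e1, e2]; simp

def Good (D m : ℕ) (u : Fin D → ℝ) : Set (Fin m → Ex D) :=
  {S | (∀ i, S i ∈ GoodEx D u) ∧ (∃ i, (S i).2 = 1) ∧ (∃ i, (S i).2 = -1)}

lemma half_le (δ : ℝ) (m : ℕ) (hδ0 : 0 < δ) (hm' : 8 * Real.log (6 / δ) < (m : ℝ)) :
    ((1:ℝ)/2)^m ≤ δ/6 := by
  have hlog2 : (1:ℝ)/8 ≤ Real.log 2 := by
    rw [Real.le_log_iff_exp_le (by norm_num : (0:ℝ) < 2)]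
    have h1 : (7:ℝ)/8 ≤ Real.exp (-(1/8)) := by
      have := Real.add_one_le_exp (-(1/8):ℝ); linarith
    have h2 : Real.exp ((1:ℝ)/8) = (Real.exp (-(1/8):ℝ))⁻¹ := by
      rw [← Real.exp_neg]; norm_num
    rw [h2]
    calc (Real.exp (-(1/8):ℝ))⁻¹ ≤ ((7:ℝ)/8)⁻¹ := inv_anti₀ (by norm_num) h1
      _ ≤ 2 := by norm_num
  have hlt : 6/δ < 2^m := by
    have h1 : Real.log (6/δ) < m * Real.log 2 := by
      nlinarith [Real.log_nonneg (by norm_num : (1:ℝ) ≤ 2)]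
    have h2 : Real.log (6/δ) < Real.log (2^m) := by rw [Real.log_pow]; push_cast; linarith
    have h60 : (0:ℝ) < 6/δ := by positivity
    exact (Real.log_lt_log_iff h60 (by positivity)).mp h2
  have : ((1:ℝ)/2)^m = ((2:ℝ)^m)⁻¹ := by rw [div_pow, one_pow, ← one_div]
  rw [this]
  calc ((2:ℝ)^m)⁻¹ ≤ ((6:ℝ)/δ)⁻¹ := inv_anti₀ (by positivity) hlt.le
    _ = δ/6 := by field_simp

lemma exp_small (D m : ℕ) (δ : ℝ) (hm : 1 ≤ m) (hδ0 : 0 < δ)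
    (hD2 : 2048 * Real.log (6 * m / δ) ≤ (D : ℝ)) :
    Real.exp (-(D:ℝ)/2048) ≤ δ/(6*m) := by
  have hm0 : (0:ℝ) < m := by exact_mod_cast hm
  have hpos : (0:ℝ) < 6*m/δ := by positivity
  have h1 : 6*m/δ ≤ Real.exp ((D:ℝ)/2048) := by
    rw [← Real.exp_log hpos]
    exact Real.exp_le_exp.mpr (by linarith)
  have h2 : Real.exp (-(D:ℝ)/2048) = (Real.exp ((D:ℝ)/2048))⁻¹ := by
    rw [← Real.exp_neg, neg_div]
  rw [h2]
  calc (Real.exp ((D:ℝ)/2048))⁻¹ ≤ (6*m/δ)⁻¹ := inv_anti₀ hpos h1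
    _ = δ/(6*m) := by field_simp

lemma ofReal_half_pow (m : ℕ) : ((1:ℝ≥0∞)/2)^m = ENNReal.ofReal (((1:ℝ)/2)^m) := by
  rw [ENNReal.ofReal_pow (by norm_num)]
  congr 1
  rw [ENNReal.ofReal_div_of_pos (by norm_num), ENNReal.ofReal_one]
  norm_num

lemma good_prob (D m : ℕ) (hm : 1 ≤ m) (u : Fin D → ℝ) (δ : ℝ)
    (hδ0 : 0 < δ) (hδ1 : δ < 1)
    (hD2 : 2048 * Real.log (6 * m / δ) ≤ (D : ℝ))
    (hm' : 8 * Real.log (6 / δ) < (m : ℝ)) :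
    ENNReal.ofReal (1 - δ) ≤ μS D m u (Good D m u) := by
  classical
  set U1 : Set (Fin m → Ex D) := ⋃ i, Function.eval i ⁻¹' (GoodEx D u)ᶜ with hU1def
  set U2 : Set (Fin m → Ex D) := Set.univ.pi fun _ => {e : Ex D | ¬ e.2 = 1} with hU2def
  set U3 : Set (Fin m → Ex D) := Set.univ.pi fun _ => {e : Ex D | ¬ e.2 = -1} with hU3def
  have hsub : (Good D m u)ᶜ ⊆ U1 ∪ (U2 ∪ U3) := by
    intro S hS
    simp only [Good, Set.mem_compl_iff, Set.mem_setOf_eq, not_and_or, not_forall,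
      not_exists] at hS
    rcases hS with ⟨i, hi⟩ | h | h
    · exact Or.inl (Set.mem_iUnion.2 ⟨i, hi⟩)
    · exact Or.inr (Or.inl (Set.mem_univ_pi.2 h))
    · exact Or.inr (Or.inr (Set.mem_univ_pi.2 h))
  have hU1 : μS D m u U1 ≤ (m : ℝ≥0∞) * (2 * ENNReal.ofReal (Real.exp (-(D:ℝ)/2048))) := by
    refine (measure_iUnion_le _).trans ?_
    rw [tsum_fintype]
    calc ∑ i : Fin m, μS D m u (Function.eval i ⁻¹' (GoodEx D u)ᶜ)
        = ∑ _i : Fin m, μD D u (GoodEx D u)ᶜ := by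
          exact Finset.sum_congr rfl fun i _ => μS_eval u i _
      _ ≤ ∑ _i : Fin m, 2 * ENNReal.ofReal (Real.exp (-(D:ℝ)/2048)) :=
          Finset.sum_le_sum fun i _ => μD_GoodExc u
      _ = (m : ℝ≥0∞) * (2 * ENNReal.ofReal (Real.exp (-(D:ℝ)/2048))) := by
          rw [Finset.sum_const, Finset.card_univ, Fintype.card_fin, nsmul_eq_mul]
  have hU2 : μS D m u U2 = ((1:ℝ≥0∞)/2)^m := by
    rw [hU2def, μS_all, μD_label u 1 (Or.inl rfl)]
  have hU3 : μS D m u U3 = ((1:ℝ≥0∞)/2)^m := by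
    rw [hU3def, μS_all, μD_label u (-1) (Or.inr rfl)]
  have hcompl : μS D m u (Good D m u)ᶜ ≤ ENNReal.ofReal δ := by
    refine (measure_mono hsub).trans ?_
    refine (measure_union_le _ _).trans ?_
    refine le_trans (add_le_add hU1 ((measure_union_le _ _).trans (by rw [hU2, hU3]))) ?_
    rw [ofReal_half_pow]
    have hh := half_le δ m hδ0 hm'
    have he := exp_small D m δ hm hδ0 hD2
    have hm0 : (0:ℝ) < m := by exact_mod_cast hm
    calc (m : ℝ≥0∞) * (2 * ENNReal.ofReal (Real.exp (-(D:ℝ)/2048)))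
          + (ENNReal.ofReal (((1:ℝ)/2)^m) + ENNReal.ofReal (((1:ℝ)/2)^m))
        ≤ (m : ℝ≥0∞) * (2 * ENNReal.ofReal (δ/(6*m)))
          + (ENNReal.ofReal (δ/6) + ENNReal.ofReal (δ/6)) := by
          gcongr
      _ = ENNReal.ofReal ((m:ℝ) * (2 * (δ/(6*m))) + (δ/6 + δ/6)) := by
          rw [ENNReal.ofReal_add (by positivity) (by positivity),
            ENNReal.ofReal_add (by positivity) (by positivity),
            ENNReal.ofReal_mul (by positivity), ENNReal.ofReal_mul (by norm_num : (0:ℝ) ≤ 2),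
            ENNReal.ofReal_natCast]
          norm_num
      _ ≤ ENNReal.ofReal δ := by
          refine ENNReal.ofReal_le_ofReal ?_
          have : (m:ℝ) * (2 * (δ/(6*m))) = δ/3 := by field_simp; ring
          rw [this]
          linarith
  have hone : (1:ℝ≥0∞) = ENNReal.ofReal (1-δ) + ENNReal.ofReal δ := by
    rw [← ENNReal.ofReal_add (by linarith) hδ0.le]
    norm_num
  have hsplit : (1:ℝ≥0∞) ≤ μS D m u (Good D m u) + μS D m u (Good D m u)ᶜ := by
    rw [← measure_univ (μ := μS D m u), ← Set.union_compl_self (Good D m u)]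
    exact measure_union_le _ _
  have hfin : μS D m u (Good D m u)ᶜ ≠ ∞ := (measure_lt_top _ _).ne
  have : ENNReal.ofReal (1-δ) + μS D m u (Good D m u)ᶜ
      ≤ μS D m u (Good D m u) + μS D m u (Good D m u)ᶜ := by
    calc ENNReal.ofReal (1-δ) + μS D m u (Good D m u)ᶜ
        ≤ ENNReal.ofReal (1-δ) + ENNReal.ofReal δ := by gcongr
      _ = 1 := hone.symm
      _ ≤ _ := hsplit
  exact ENNReal.le_of_add_le_add_right hfin this



def inner2 {n : ℕ} (v w : Fin n → ℝ) : ℝ := ∑ i, v i * w i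

lemma sqnorm_nonneg {n : ℕ} (v : Fin n → ℝ) : 0 ≤ sqnorm v :=
  Finset.sum_nonneg fun _ _ => sq_nonneg _

lemma sqnorm_smul {n : ℕ} (c : ℝ) (v : Fin n → ℝ) : sqnorm (c • v) = c^2 * sqnorm v := by
  unfold sqnorm
  rw [Finset.mul_sum]
  exact Finset.sum_congr rfl fun i _ => by simp [mul_pow]

lemma sqnorm_half_add {n : ℕ} (v w : Fin n → ℝ) :
    sqnorm ((1/2:ℝ) • (v + w)) = sqnorm v / 4 + inner2 v w / 2 + sqnorm w / 4 := by
  unfold sqnorm inner2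
  rw [Finset.sum_div, Finset.sum_div, Finset.sum_div, ← Finset.sum_add_distrib,
    ← Finset.sum_add_distrib]
  exact Finset.sum_congr rfl fun i _ => by simp [Pi.smul_apply]; ring

lemma alg_ge (D m : ℕ) (hm : 1 ≤ m) (u : Fin D → ℝ) (hu : sqnorm u = (D:ℝ)/4)
    (hD3 : 6 * Real.log (2*m) ≤ (D:ℝ)) (S : Fin m → Ex D) (hS : S ∈ Good D m u)
    (x₂ : Fin D → ℝ) (hx : ∀ i, |inner2 x₂ ((S i).1.2)| ≤ 7*(D:ℝ)/192)
    (y : ℝ) (hy : y = 1 ∨ y = -1) :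
    1 ≤ y * alg D m S (y • u, x₂) := by
  classical
  obtain ⟨hGE, hex1, hex2⟩ := hS
  have hD0 : (0:ℝ) ≤ D := Nat.cast_nonneg D
  have hm0 : (1:ℝ) ≤ m := by exact_mod_cast hm
  set A := sqnorm x₂ / 4 with hA
  have hA0 : 0 ≤ A := div_nonneg (sqnorm_nonneg _) (by norm_num)
  set U := Real.exp (A + 7*(D:ℝ)/384 + 35*(D:ℝ)/128) with hU
  set L := Real.exp (A + (D:ℝ)/4 - 7*(D:ℝ)/384 + 29*(D:ℝ)/128) with hL
  have hU1 : 1 ≤ U := by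
    rw [hU]
    refine Real.one_le_exp ?_
    linarith
  obtain ⟨i₀, hi₀⟩ : ∃ i, (S i).2 = y := by
    rcases hy with h | h
    · subst h; exact hex1
    · subst h; exact hex2
  set f : Fin m → ℝ := fun i => y * ((S i).2 *
    Real.exp (sqnorm ((1/2:ℝ) • (y•u + (S i).1.1)) + sqnorm ((1/2:ℝ) • (x₂ + (S i).1.2)))) with hf
  have hterm : ∀ i, -U ≤ f i ∧ ((S i).2 = y → L ≤ f i) := by
    intro i
    obtain ⟨hcase, hn1, hn2⟩ := hGE i
    set Q := sqnorm ((1/2:ℝ) • (x₂ + (S i).1.2)) with hQ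
    have hQeq : Q = A + inner2 x₂ ((S i).1.2) / 2 + sqnorm ((S i).1.2) / 4 := by
      rw [hQ, sqnorm_half_add, hA]
    have habs := hx i
    have hQle : Q ≤ A + 7*(D:ℝ)/384 + 35*(D:ℝ)/128 := by
      have h1 := le_of_abs_le habs
      rw [hQeq]; linarith
    have hQge : A - 7*(D:ℝ)/384 + 29*(D:ℝ)/128 ≤ Q := by
      have h1 := neg_abs_le (inner2 x₂ ((S i).1.2))
      rw [hQeq]; linarith
    by_cases hiy : (S i).2 = y
    · have hyy : y * (S i).2 = 1 := by
        rcases hy with h | h <;> subst h <;> rw [hiy] <;> norm_num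
      have h11 : (S i).1.1 = y • u := by
        rcases hcase with ⟨ha, hb⟩ | ⟨ha, hb⟩
        · rw [ha, ← hiy, hb, one_smul]
        · rw [ha, ← hiy, hb, neg_smul, one_smul]
      have hhalf : (1/2:ℝ) • (y•u + y•u) = y • u := by
        funext j; simp [Pi.smul_apply]; ring
      have hy2 : y^2 = 1 := by rcases hy with h | h <;> subst h <;> norm_num
      have hF : sqnorm ((1/2:ℝ) • (y•u + (S i).1.1)) = (D:ℝ)/4 := by
        rw [h11, hhalf, sqnorm_smul, hy2, hu, one_mul]
      have hfi : f i = Real.exp ((D:ℝ)/4 + Q) := by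
        rw [hf]; dsimp only; rw [hF, ← hQ, ← mul_assoc, hyy, one_mul]
      constructor
      · rw [hfi]
        have : (0:ℝ) < Real.exp ((D:ℝ)/4 + Q) := Real.exp_pos _
        nlinarith [Real.exp_pos (A + 7*(D:ℝ)/384 + 35*(D:ℝ)/128)]
      · intro _
        rw [hfi, hL]
        exact Real.exp_le_exp.mpr (by linarith)
    · have hyy : y * (S i).2 = -1 := by
        rcases hy with h | h <;> subst h <;> rcases hcase with ⟨ha, hb⟩ | ⟨ha, hb⟩ <;>
          first
            | (exact absurd hb hiy)
            | (rw [hb]; norm_num)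
      have h11 : (S i).1.1 = -(y • u) := by
        rcases hy with h | h <;> subst h <;> rcases hcase with ⟨ha, hb⟩ | ⟨ha, hb⟩ <;>
          first
            | (exact absurd hb hiy)
            | (rw [ha]; funext j; simp)
      have hF : sqnorm ((1/2:ℝ) • (y•u + (S i).1.1)) = 0 := by
        rw [h11]
        have : y•u + -(y•u) = (0 : Fin D → ℝ) := by funext j; simp
        rw [this]
        have : (1/2:ℝ) • (0 : Fin D → ℝ) = 0 := by funext j; simp
        rw [this]
        simp [sqnorm]
      have hfi : f i = -Real.exp (Q) := by
        rw [hf]; dsimp only; rw [hF, ← hQ, ← mul_assoc, hyy, zero_add]; ring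
      constructor
      · rw [hfi, hU, neg_le_neg_iff]
        exact Real.exp_le_exp.mpr (by linarith)
      · intro h; exact absurd h hiy
  have hsum : y * alg D m S (y • u, x₂) = ∑ i, f i := by
    rw [alg, Finset.mul_sum]
  have hL2m : 2*(m:ℝ) * U ≤ L := by
    have hLU : L = Real.exp ((D:ℝ)/6) * U := by
      rw [hL, hU, ← Real.exp_add]; congr 1; ring
    have h2m : 2*(m:ℝ) ≤ Real.exp ((D:ℝ)/6) := by
      have hm02 : (0:ℝ) < 2*m := by linarith
      calc 2*(m:ℝ) = Real.exp (Real.log (2*m)) := (Real.exp_log hm02).symm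
        _ ≤ _ := Real.exp_le_exp.mpr (by linarith)
    rw [hLU]
    nlinarith
  have hcard : ((Finset.univ.erase i₀).card : ℝ) ≤ m := by
    have h1 : (Finset.univ.erase i₀).card ≤ (Finset.univ : Finset (Fin m)).card :=
      Finset.card_le_card (Finset.erase_subset _ _)
    rw [Finset.card_univ, Fintype.card_fin] at h1
    exact_mod_cast h1
  calc (1:ℝ) ≤ (m:ℝ) * U := by nlinarith
    _ ≤ L - (m:ℝ) * U := by nlinarith
    _ ≤ L - ((Finset.univ.erase i₀).card : ℝ) * U := by nlinarith
    _ = L + ((Finset.univ.erase i₀).card : ℝ) * (-U) := by ring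
    _ ≤ f i₀ + ∑ i ∈ Finset.univ.erase i₀, f i := by
        refine add_le_add ((hterm i₀).2 hi₀) ?_
        calc ((Finset.univ.erase i₀).card : ℝ) * (-U)
            = ∑ _i ∈ Finset.univ.erase i₀, (-U) := by rw [Finset.sum_const, nsmul_eq_mul]
          _ ≤ ∑ i ∈ Finset.univ.erase i₀, f i :=
              Finset.sum_le_sum fun i _ => (hterm i).1
    _ = ∑ i, f i := Finset.add_sum_erase _ f (Finset.mem_univ i₀)
    _ = y * alg D m S (y • u, x₂) := hsum.symm




lemma continuous_alg (D m : ℕ) (S : Fin m → Ex D) : Continuous (alg D m S) := by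
  unfold alg
  refine continuous_finset_sum _ fun i _ => Continuous.mul continuous_const ?_
  refine Real.continuous_exp.comp (Continuous.add ?_ ?_)
  · exact continuous_sqnorm.comp (by fun_prop)
  · exact continuous_sqnorm.comp (by fun_prop)

lemma inner2_neg {n : ℕ} (v w : Fin n → ℝ) : inner2 v (-w) = - inner2 v w := by
  unfold inner2
  rw [← Finset.sum_neg_distrib]
  exact Finset.sum_congr rfl fun i _ => by simp

lemma sqnorm_neg {n : ℕ} (w : Fin n → ℝ) : sqnorm (-w) = sqnorm w := by
  unfold sqnorm
  exact Finset.sum_congr rfl fun i _ => by simp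

lemma continuous_inner2 {n : ℕ} (w : Fin n → ℝ) : Continuous (fun x => inner2 x w) := by
  unfold inner2
  exact continuous_finset_sum _ fun i _ => (continuous_apply i).mul continuous_const

lemma zbound (D m : ℕ) (hm : 1 ≤ m) (u : Fin D → ℝ) (hu : sqnorm u = (D:ℝ)/4)
    (ε : ℝ) (hε : 0 < ε)
    (hD1 : 2048 * Real.log (6 * m / ε) ≤ (D : ℝ))
    (hD3 : 6 * Real.log (2 * m) ≤ (D : ℝ))
    (S : Fin m → Ex D) (hS : S ∈ Good D m u) :
    μD D u {z : Ex D | z.2 * alg D m S z.1 < 1} ≤ ENNReal.ofReal ε := by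
  classical
  set BadZ := {z : Ex D | z.2 * alg D m S z.1 < 1} with hBadZ
  have hBadZm : MeasurableSet BadZ := by
    refine measurableSet_lt ?_ measurable_const
    exact measurable_snd.mul ((continuous_alg D m S).measurable.comp measurable_fst)
  set Badx : Set (Fin D → ℝ) :=
    ⋃ i, ({x | 7*(D:ℝ)/192 ≤ inner2 x ((S i).1.2)} ∪
          {x | 7*(D:ℝ)/192 ≤ inner2 x (-(S i).1.2)}) with hBadx
  have hsub : ∀ (y : ℝ), y = 1 ∨ y = -1 → ∀ x₂ : Fin D → ℝ, x₂ ∉ Badx →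
      1 ≤ y * alg D m S (y • u, x₂) := by
    intro y hy x₂ hx₂
    refine alg_ge D m hm u hu hD3 S hS x₂ ?_ y hy
    intro i
    rw [hBadx] at hx₂
    simp only [Set.mem_iUnion, Set.mem_union, Set.mem_setOf_eq, not_exists, not_or] at hx₂
    obtain ⟨h1, h2⟩ := hx₂ i
    rw [inner2_neg] at h2
    rw [abs_le]
    constructor <;> [linarith [lt_of_not_ge h2]; linarith [lt_of_not_ge h1]]
  have hpre1 : (fun x₂ => (((u, x₂) : (Fin D → ℝ) × (Fin D → ℝ)), (1:ℝ))) ⁻¹' BadZ ⊆ Badx := by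
    intro x₂ hx₂
    by_contra hno
    have := hsub 1 (Or.inl rfl) x₂ hno
    rw [one_smul, one_mul] at this
    simp only [hBadZ, Set.mem_preimage, Set.mem_setOf_eq, one_mul] at hx₂
    linarith
  have hpre2 : (fun x₂ => (((-u, x₂) : (Fin D → ℝ) × (Fin D → ℝ)), (-1:ℝ))) ⁻¹' BadZ ⊆ Badx := by
    intro x₂ hx₂
    by_contra hno
    have h := hsub (-1) (Or.inr rfl) x₂ hno
    have hsmul : (-1 : ℝ) • u = -u := by funext j; simp
    rw [hsmul] at h
    simp only [hBadZ, Set.mem_preimage, Set.mem_setOf_eq] at hx₂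
    linarith
  have hBadxBound : noise D Badx ≤ ENNReal.ofReal ε := by
    refine (measure_iUnion_le _).trans ?_
    rw [tsum_fintype]
    have hone : ∀ i : Fin m, noise D ({x | 7*(D:ℝ)/192 ≤ inner2 x ((S i).1.2)} ∪
        {x | 7*(D:ℝ)/192 ≤ inner2 x (-(S i).1.2)})
        ≤ 2 * ENNReal.ofReal (Real.exp (-(D:ℝ)/2048)) := by
      intro i
      obtain ⟨_, _, hn2⟩ := hS.1 i
      refine (measure_union_le _ _).trans ?_
      rw [two_mul]
      have key : ∀ w : Fin D → ℝ, sqnorm w ≤ 35*(D:ℝ)/32 →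
          noise D {x | 7*(D:ℝ)/192 ≤ inner2 x w} ≤ ENNReal.ofReal (Real.exp (-(D:ℝ)/2048)) := by
        intro w hw
        have hseteq : {x : Fin D → ℝ | 7*(D:ℝ)/192 ≤ inner2 x w}
            = {x : Fin D → ℝ | 7*(D:ℝ)/192 ≤ ∑ j, w j * x j} := by
          ext x
          simp only [Set.mem_setOf_eq, inner2]
          rw [show ∑ j, x j * w j = ∑ j, w j * x j from
            Finset.sum_congr rfl fun j _ => mul_comm _ _]
        rw [hseteq]
        exact noise_inner D w hw
      refine add_le_add (key _ hn2) (key _ ?_)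
      rw [sqnorm_neg]; exact hn2
    calc ∑ i : Fin m, noise D _ ≤ ∑ _i : Fin m, 2 * ENNReal.ofReal (Real.exp (-(D:ℝ)/2048)) :=
          Finset.sum_le_sum fun i _ => hone i
      _ = (m : ℝ≥0∞) * (2 * ENNReal.ofReal (Real.exp (-(D:ℝ)/2048))) := by
          rw [Finset.sum_const, Finset.card_univ, Fintype.card_fin, nsmul_eq_mul]
      _ ≤ (m : ℝ≥0∞) * (2 * ENNReal.ofReal (ε/(6*m))) := by
          gcongr
          exact exp_small D m ε hm hε hD1
      _ = ENNReal.ofReal ((m:ℝ) * (2 * (ε/(6*m)))) := by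
          rw [ENNReal.ofReal_mul (by positivity), ENNReal.ofReal_mul (by norm_num : (0:ℝ) ≤ 2),
            ENNReal.ofReal_natCast]
          norm_num
      _ ≤ ENNReal.ofReal ε := by
          refine ENNReal.ofReal_le_ofReal ?_
          have hm0 : (0:ℝ) < m := by exact_mod_cast hm
          have : (m:ℝ) * (2 * (ε/(6*m))) = ε/3 := by field_simp; ring
          rw [this]; linarith
  rw [μD_apply u BadZ hBadZm]
  calc 1/2 * noise D _ + 1/2 * noise D _
      ≤ 1/2 * noise D Badx + 1/2 * noise D Badx := by
        gcongr <;> exact measure_mono (by assumption)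
    _ = noise D Badx := by rw [← add_mul, one_div, ENNReal.inv_two_add_inv_two, one_mul]
    _ ≤ ENNReal.ofReal ε := hBadxBound

lemma testLoss_le (D m : ℕ) (u : Fin D → ℝ) (ε : ℝ) (hε : 0 < ε) (S : Fin m → Ex D)
    (hbad : μD D u {z : Ex D | z.2 * alg D m S z.1 < 1} ≤ ENNReal.ofReal ε) :
    testLoss D u 0 (alg D m S) ≤ ε := by
  classical
  set T := {z : Ex D | z.2 * alg D m S z.1 ≤ 0} with hT
  set BadZ := {z : Ex D | z.2 * alg D m S z.1 < 1} with hBadZ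
  have hmul : Measurable fun z : Ex D => z.2 * alg D m S z.1 :=
    measurable_snd.mul ((continuous_alg D m S).measurable.comp measurable_fst)
  have hTm : MeasurableSet T := measurableSet_le hmul measurable_const
  have hBadZm : MeasurableSet BadZ := measurableSet_lt hmul measurable_const
  have hfeq : (fun z : Ex D => ramp 0 (alg D m S z.1) z.2) = T.indicator (fun _ => (1:ℝ)) := by
    funext z
    rw [ramp, Set.indicator_apply]
    by_cases hz : z.2 * alg D m S z.1 ≤ 0
    · rw [if_pos hz, if_pos (show z ∈ T from hz)]
    · rw [if_neg hz, if_pos (le_of_lt (lt_of_not_ge hz)), if_neg (show z ∉ T from hz)]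
  have hint1 : Integrable (fun z : Ex D => ramp 0 (alg D m S z.1) z.2) (μD D u) := by
    rw [hfeq]
    exact (integrable_const (1:ℝ)).indicator hTm
  have hint2 : Integrable (BadZ.indicator (fun _ => (1:ℝ))) (μD D u) :=
    (integrable_const (1:ℝ)).indicator hBadZm
  have hle : ∀ z : Ex D, ramp 0 (alg D m S z.1) z.2 ≤ BadZ.indicator (fun _ => (1:ℝ)) z := by
    intro z
    rw [congrFun hfeq z, Set.indicator_apply, Set.indicator_apply]
    by_cases hz : z ∈ T
    · have hzB : z ∈ BadZ := lt_of_le_of_lt (show z.2 * alg D m S z.1 ≤ 0 from hz) one_pos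
      rw [if_pos hz, if_pos hzB]
    · rw [if_neg hz]
      by_cases hz2 : z ∈ BadZ
      · rw [if_pos hz2]; norm_num
      · rw [if_neg hz2]
  rw [testLoss]
  calc ∫ z, ramp 0 (alg D m S z.1) z.2 ∂(μD D u)
      ≤ ∫ z, BadZ.indicator (fun _ => (1:ℝ)) z ∂(μD D u) := integral_mono hint1 hint2 hle
    _ = (μD D u BadZ).toReal := by
        rw [MeasureTheory.integral_indicator_const (1:ℝ) hBadZm, smul_eq_mul, mul_one]; rfl
    _ ≤ ε := ENNReal.toReal_le_of_le_ofReal hε.le hbad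


end Auxiliary

/-- with probability at least `1 - δ` over the draw of the
training sample, the learned hypothesis satisfies
`Pr_{(z,y)~𝒟}[y·h_S(z) < 1] ≤ ε`; in particular its 0-1 test error is at most
`ε`. -/
theorem test_error_small
    (D m : ℕ) (hm : 1 ≤ m) (u : Fin D → ℝ)
    (hu : Real.sqrt (sqnorm u) = Real.sqrt D / 2)
    (ε δ : ℝ) (hε : 0 < ε) (hδ0 : 0 < δ) (hδ1 : δ < 1)
    (hD1 : 2048 * Real.log (6 * m / ε) ≤ (D : ℝ))
    (hD2 : 2048 * Real.log (6 * m / δ) ≤ (D : ℝ))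
    (hD3 : 6 * Real.log (2 * m) ≤ (D : ℝ))
    (hm' : 8 * Real.log (6 / δ) < (m : ℝ)) :
    ENNReal.ofReal (1 - δ) ≤
      μS D m u {S |
        μD D u {z | z.2 * alg D m S z.1 < 1} ≤ ENNReal.ofReal ε ∧
        testLoss D u 0 (alg D m S) ≤ ε} := by
  have hu4 : sqnorm u = (D:ℝ)/4 := by
    have h0 := sqnorm_nonneg u
    have h := congrArg (fun t : ℝ => t^2) hu
    rw [Real.sq_sqrt h0] at h
    rw [h, div_pow, Real.sq_sqrt (Nat.cast_nonneg D)]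
    norm_num
  refine le_trans (good_prob D m hm u δ hδ0 hδ1 hD2 hm') (measure_mono ?_)
  intro S hS
  have hb := zbound D m hm u hu4 ε hε hD1 hD3 S hS
  exact ⟨hb, testLoss_le D m u ε hε S hb⟩

end ExpExample
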